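/- Let σ₁, σ₂ > 0 and ρ ∈ ℝ with D := σ₁²σ₂² − ρ² > 0, and define p(y₁,y₂) := (y₂/(σ₂√(2πD))) · exp(−(σ₂²y₁² + σ₁²y₂² − 2ρy₁y₂)/(2D)) for (y₁,y₂) ∈ ℝ×(0,∞). Then for every y₁ ∈ ℝ, ∫_{−∞}^{∞} ∫_{0}^{∞} p(y₁ + ỹ₁, ỹ₂) · p(ỹ₁, ỹ₂) dỹ₂ dỹ₁ = (1/(8√D)) · exp(−σ₂²y₁²/(4D)). -/

import Mathlib

open MeasureTheory Real Set Filter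

namespace DensityConvolution


lemma aux_integrable_exp_quad {a : ℝ} (ha : 0 < a) (b c : ℝ) :
    Integrable fun x : ℝ => Real.exp (-a * x ^ 2 + b * x + c) := by
  have ha' : a ≠ 0 := ha.ne'
  have key : ∀ x : ℝ, -a * (x - b / (2 * a)) ^ 2 + (c + b ^ 2 / (4 * a))
      = -a * x ^ 2 + b * x + c := by
    intro x; field_simp; ring
  have h1 : Integrable fun x : ℝ => Real.exp (-a * x ^ 2) * Real.exp (c + b ^ 2 / (4 * a)) :=
    (integrable_exp_neg_mul_sq ha).mul_const _
  have h2 := h1.comp_sub_right (b / (2 * a))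
  refine h2.congr (Filter.Eventually.of_forall fun x => ?_)
  simp only [← Real.exp_add, key]

lemma aux_integral_exp_quad {a : ℝ} (ha : 0 < a) (b c : ℝ) :
    ∫ x : ℝ, Real.exp (-a * x ^ 2 + b * x + c)
      = Real.sqrt (π / a) * Real.exp (c + b ^ 2 / (4 * a)) := by
  have ha' : a ≠ 0 := ha.ne'
  have key : ∀ x : ℝ, -a * x ^ 2 + b * x + c
      = -a * (x - b / (2 * a)) ^ 2 + (c + b ^ 2 / (4 * a)) := by
    intro x; field_simp; ring
  calc ∫ x : ℝ, Real.exp (-a * x ^ 2 + b * x + c)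
      = ∫ x : ℝ, Real.exp (-a * (x - b / (2 * a)) ^ 2) * Real.exp (c + b ^ 2 / (4 * a)) := by
        congr 1 with x
        rw [← Real.exp_add, ← key]
    _ = (∫ x : ℝ, Real.exp (-a * (x - b / (2 * a)) ^ 2)) * Real.exp (c + b ^ 2 / (4 * a)) := by
        rw [integral_mul_const]
    _ = Real.sqrt (π / a) * Real.exp (c + b ^ 2 / (4 * a)) := by
        rw [integral_sub_right_eq_self (fun x => Real.exp (-a * x ^ 2)) (b / (2 * a)),
          integral_gaussian]

lemma aux_integrable_sq_mul_exp {a : ℝ} (ha : 0 < a) :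
    Integrable fun x : ℝ => x ^ 2 * Real.exp (-a * x ^ 2) := by
  have := integrable_rpow_mul_exp_neg_mul_sq ha (s := 2) (by norm_num)
  refine this.congr (Filter.Eventually.of_forall fun x => ?_)
  simp [Real.rpow_natCast]

lemma aux_integrable_sq_mul_exp_quad {a : ℝ} (ha : 0 < a) (b c : ℝ) :
    Integrable fun x : ℝ => x ^ 2 * Real.exp (-a * x ^ 2 + b * x + c) := by
  have ha' : a ≠ 0 := ha.ne'
  set m := b / (2 * a) with hm
  have key : ∀ x : ℝ, -a * (x - m) ^ 2 + (c + b ^ 2 / (4 * a))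
      = -a * x ^ 2 + b * x + c := by
    intro x; simp only [hm]; field_simp; ring
  have isum : Integrable fun x : ℝ => (x + m) ^ 2 * Real.exp (-a * x ^ 2) := by
    have h := ((aux_integrable_sq_mul_exp ha).add
      ((integrable_mul_exp_neg_mul_sq ha).const_mul (2 * m))).add
      ((integrable_exp_neg_mul_sq ha).const_mul (m ^ 2))
    refine h.congr (Filter.Eventually.of_forall fun x => ?_)
    simp only [Pi.add_apply]; ring
  have h2 := (isum.comp_sub_right m).mul_const (Real.exp (c + b ^ 2 / (4 * a)))
  refine h2.congr (Filter.Eventually.of_forall fun x => ?_)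
  simp only [sub_add_cancel]
  rw [mul_assoc, ← Real.exp_add, key]


lemma aux_tendsto_mul_exp {b : ℝ} (hb : 0 < b) :
    Tendsto (fun x : ℝ => x * Real.exp (-b * x ^ 2)) atTop (nhds 0) := by
  have h := (rpow_mul_exp_neg_mul_sq_isLittleO_exp_neg hb 1).tendsto_zero_of_tendsto
    (tendsto_exp_atBot.comp (tendsto_id.const_mul_atTop_of_neg (by norm_num)))
  refine Tendsto.congr' ?_ h
  filter_upwards [eventually_gt_atTop (0:ℝ)] with x hx
  rw [Real.rpow_one]

lemma aux_integral_Ioi_sq_mul_exp {b : ℝ} (hb : 0 < b) :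
    ∫ x in Ioi (0:ℝ), x ^ 2 * Real.exp (-b * x ^ 2) = Real.sqrt (π / b) / (4 * b) := by
  have hb' : b ≠ 0 := hb.ne'
  set g : ℝ → ℝ := fun x => -(2*b)⁻¹ * (x * Real.exp (-b * x ^ 2)) with hg
  have hderiv : ∀ x : ℝ, HasDerivAt g
      (x ^ 2 * Real.exp (-b * x ^ 2) - (2*b)⁻¹ * Real.exp (-b * x ^ 2)) x := by
    intro x
    have h1 : HasDerivAt (fun x : ℝ => x * Real.exp (-b * x ^ 2))
        (Real.exp (-b * x ^ 2) + x * ((-b * (2 * x)) * Real.exp (-b * x ^ 2))) x := by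
      have hexp : HasDerivAt (fun x : ℝ => Real.exp (-b * x ^ 2))
          ((-b * (2 * x)) * Real.exp (-b * x ^ 2)) x := by
        have := ((hasDerivAt_pow 2 x).const_mul (-b)).exp
        simpa [mul_comm, pow_one] using this
      exact ((hasDerivAt_id' x).mul hexp).congr_deriv (by ring)
    refine (h1.const_mul (-(2*b)⁻¹)).congr_deriv ?_
    have h2b : b * b⁻¹ = 1 := mul_inv_cancel₀ hb'
    linear_combination (x^2 * Real.exp (-b * x ^ 2)) * h2b
  have hint : IntegrableOn (fun x : ℝ =>
      x ^ 2 * Real.exp (-b * x ^ 2) - (2*b)⁻¹ * Real.exp (-b * x ^ 2)) (Ioi 0) := by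
    have h2 : Integrable fun x : ℝ => x ^ 2 * Real.exp (-b * x ^ 2) := by
      have := integrable_rpow_mul_exp_neg_mul_sq hb (s := 2) (by norm_num)
      refine this.congr (Filter.Eventually.of_forall fun x => ?_)
      simp [Real.rpow_natCast]
    exact (h2.sub ((integrable_exp_neg_mul_sq hb).const_mul _)).integrableOn
  have htend : Tendsto g atTop (nhds 0) := by
    have h := (aux_tendsto_mul_exp hb).const_mul (-(2*b)⁻¹)
    rw [mul_zero] at h
    exact h
  have hFTC := integral_Ioi_of_hasDerivAt_of_tendsto' (a := 0)
    (fun x _ => hderiv x) hint htend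
  have hg0 : g 0 = 0 := by simp [hg]
  rw [hg0, sub_zero] at hFTC
  have split : ∫ x in Ioi (0:ℝ), x ^ 2 * Real.exp (-b * x ^ 2)
      = (∫ x in Ioi (0:ℝ), (x ^ 2 * Real.exp (-b * x ^ 2) - (2*b)⁻¹ * Real.exp (-b * x ^ 2)))
        + (2*b)⁻¹ * ∫ x in Ioi (0:ℝ), Real.exp (-b * x ^ 2) := by
    rw [← integral_const_mul, ← integral_add hint
      (((integrable_exp_neg_mul_sq hb).const_mul _).integrableOn)]
    congr 1 with x
    ring
  rw [split, hFTC, integral_gaussian_Ioi, zero_add]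
  rw [eq_div_iff (by positivity : (4:ℝ) * b ≠ 0)]
  field_simp
  ring



/-- The density `p(y₁,y₂) = (y₂/(σ₂√(2πD))) exp(−(σ₂²y₁² + σ₁²y₂² − 2ρy₁y₂)/(2D))`
with `D = σ₁²σ₂² − ρ²`. -/
noncomputable def pdens (σ₁ σ₂ ρ : ℝ) (y₁ y₂ : ℝ) : ℝ :=
  y₂ / (σ₂ * Real.sqrt (2 * π * (σ₁ ^ 2 * σ₂ ^ 2 - ρ ^ 2))) *
    Real.exp (-(σ₂ ^ 2 * y₁ ^ 2 + σ₁ ^ 2 * y₂ ^ 2 - 2 * ρ * y₁ * y₂) /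
      (2 * (σ₁ ^ 2 * σ₂ ^ 2 - ρ ^ 2)))

/-- **Lemma (explicit convolution integral).** For `σ₁, σ₂ > 0`, `ρ ∈ ℝ` with
`D = σ₁²σ₂² − ρ² > 0` and every `y₁ ∈ ℝ`,
`∫_{−∞}^∞ ∫_0^∞ p(y₁+ỹ₁, ỹ₂) p(ỹ₁, ỹ₂) dỹ₂ dỹ₁ = (8√D)⁻¹ exp(−σ₂²y₁²/(4D))`. -/
theorem convolution_integral_eval
    (σ₁ σ₂ ρ : ℝ) (hσ₁ : 0 < σ₁) (hσ₂ : 0 < σ₂)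
    (hD : 0 < σ₁ ^ 2 * σ₂ ^ 2 - ρ ^ 2) (y₁ : ℝ) :
    ∫ t₁ : ℝ, ∫ t₂ in Set.Ioi (0 : ℝ),
        pdens σ₁ σ₂ ρ (y₁ + t₁) t₂ * pdens σ₁ σ₂ ρ t₁ t₂ =
      1 / (8 * Real.sqrt (σ₁ ^ 2 * σ₂ ^ 2 - ρ ^ 2)) *
        Real.exp (-(σ₂ ^ 2 * y₁ ^ 2) / (4 * (σ₁ ^ 2 * σ₂ ^ 2 - ρ ^ 2))) := by
  set D : ℝ := σ₁ ^ 2 * σ₂ ^ 2 - ρ ^ 2 with hD0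
  have hDne : D ≠ 0 := hD.ne'
  have hσ₁ne : σ₁ ≠ 0 := hσ₁.ne'
  have hσ₂ne : σ₂ ≠ 0 := hσ₂.ne'
  have hπ : (0:ℝ) < π := pi_pos
  set f : ℝ → ℝ → ℝ := fun t₁ t₂ =>
    pdens σ₁ σ₂ ρ (y₁ + t₁) t₂ * pdens σ₁ σ₂ ρ t₁ t₂ with hf
  set C : ℝ := 1 / (σ₂ ^ 2 * (2 * π * D)) with hC
  have hCpos : 0 < C := by rw [hC]; positivity
  -- master pointwise formula
  have master : ∀ t₁ t₂ : ℝ, f t₁ t₂ = C * (t₂ ^ 2 *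
      Real.exp (-(σ₂ ^ 2 * ((y₁ + t₁) ^ 2 + t₁ ^ 2) - 2 * ρ * (y₁ + 2 * t₁) * t₂
        + 2 * σ₁ ^ 2 * t₂ ^ 2) / (2 * D))) := by
    intro t₁ t₂
    have hs : Real.sqrt (2 * π * D) * Real.sqrt (2 * π * D) = 2 * π * D :=
      Real.mul_self_sqrt (by positivity)
    have hsne : Real.sqrt (2 * π * D) ≠ 0 := by positivity
    simp only [hf, pdens, ← hD0]
    rw [mul_mul_mul_comm, ← Real.exp_add]
    have harg : -(σ₂ ^ 2 * (y₁ + t₁) ^ 2 + σ₁ ^ 2 * t₂ ^ 2 - 2 * ρ * (y₁ + t₁) * t₂) / (2 * D)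
        + -(σ₂ ^ 2 * t₁ ^ 2 + σ₁ ^ 2 * t₂ ^ 2 - 2 * ρ * t₁ * t₂) / (2 * D)
        = -(σ₂ ^ 2 * ((y₁ + t₁) ^ 2 + t₁ ^ 2) - 2 * ρ * (y₁ + 2 * t₁) * t₂
            + 2 * σ₁ ^ 2 * t₂ ^ 2) / (2 * D) := by
      field_simp
      ring
    rw [harg]
    have hden : (σ₂ * Real.sqrt (2 * π * D)) * (σ₂ * Real.sqrt (2 * π * D))
        = σ₂ ^ 2 * (2 * π * D) := by rw [mul_mul_mul_comm, hs]; ring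
    have hA : t₂ / (σ₂ * Real.sqrt (2 * π * D)) * (t₂ / (σ₂ * Real.sqrt (2 * π * D)))
        = C * t₂ ^ 2 := by
      rw [div_mul_div_comm, hden, hC]; ring
    rw [hA, mul_assoc]
  have hD' : (0:ℝ) < σ₁ ^ 2 * σ₂ ^ 2 - ρ ^ 2 := by rw [← hD0]; exact hD
  -- exponent upper bound
  have hEbound : ∀ t₁ t₂ : ℝ,
      -(σ₂ ^ 2 * ((y₁ + t₁) ^ 2 + t₁ ^ 2) - 2 * ρ * (y₁ + 2 * t₁) * t₂
        + 2 * σ₁ ^ 2 * t₂ ^ 2) / (2 * D)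
      ≤ -(4 * σ₁ ^ 2)⁻¹ * t₁ ^ 2 + -(4 * σ₂ ^ 2)⁻¹ * t₂ ^ 2 := by
    intro t₁ t₂
    have hpoly : σ₂ ^ 2 * D * t₁ ^ 2 + σ₁ ^ 2 * D * t₂ ^ 2
        ≤ 2 * σ₁ ^ 2 * σ₂ ^ 2 * (σ₂ ^ 2 * ((y₁ + t₁) ^ 2 + t₁ ^ 2)
          - 2 * ρ * (y₁ + 2 * t₁) * t₂ + 2 * σ₁ ^ 2 * t₂ ^ 2) := by
      rw [hD0]
      nlinarith [mul_nonneg (sq_nonneg σ₂) (sq_nonneg (σ₁ ^ 2 * t₂ - ρ * (y₁ + t₁))),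
        mul_nonneg (mul_nonneg hD'.le (sq_nonneg σ₂)) (sq_nonneg (y₁ + t₁)),
        mul_nonneg (sq_nonneg σ₂) (sq_nonneg (σ₁ ^ 2 * t₂ - ρ * t₁)),
        mul_nonneg (sq_nonneg σ₁) (sq_nonneg (σ₂ ^ 2 * t₁ - ρ * t₂))]
    rw [← sub_nonneg]
    have hrew : -(4 * σ₁ ^ 2)⁻¹ * t₁ ^ 2 + -(4 * σ₂ ^ 2)⁻¹ * t₂ ^ 2
        - -(σ₂ ^ 2 * ((y₁ + t₁) ^ 2 + t₁ ^ 2) - 2 * ρ * (y₁ + 2 * t₁) * t₂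
          + 2 * σ₁ ^ 2 * t₂ ^ 2) / (2 * D)
        = (2 * σ₁ ^ 2 * σ₂ ^ 2 * (σ₂ ^ 2 * ((y₁ + t₁) ^ 2 + t₁ ^ 2)
            - 2 * ρ * (y₁ + 2 * t₁) * t₂ + 2 * σ₁ ^ 2 * t₂ ^ 2)
          - (σ₂ ^ 2 * D * t₁ ^ 2 + σ₁ ^ 2 * D * t₂ ^ 2)) / (4 * σ₁ ^ 2 * σ₂ ^ 2 * D) := by
      field_simp
      ring
    rw [hrew]
    exact div_nonneg (by linarith) (by positivity)
  have hfnonneg : ∀ t₁ t₂ : ℝ, 0 ≤ f t₁ t₂ := by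
    intro t₁ t₂; rw [master]; positivity
  have hcont : Continuous (Function.uncurry f) := by
    simp only [hf, Function.uncurry]
    unfold pdens
    fun_prop
  set g : ℝ × ℝ → ℝ := fun p =>
    (C * Real.exp (-(4 * σ₁ ^ 2)⁻¹ * p.1 ^ 2)) *
      (p.2 ^ 2 * Real.exp (-(4 * σ₂ ^ 2)⁻¹ * p.2 ^ 2)) with hg
  have hgint : Integrable g (volume.prod (volume.restrict (Ioi 0))) :=
    ((integrable_exp_neg_mul_sq (by positivity : (0:ℝ) < (4 * σ₁ ^ 2)⁻¹)).const_mul C).mul_prod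
      ((aux_integrable_sq_mul_exp (by positivity : (0:ℝ) < (4 * σ₂ ^ 2)⁻¹)).restrict)
  have hFint : Integrable (Function.uncurry f) (volume.prod (volume.restrict (Ioi 0))) := by
    refine hgint.mono' hcont.aestronglyMeasurable ?_
    refine Filter.Eventually.of_forall fun p => ?_
    show ‖f p.1 p.2‖ ≤ g p
    rw [Real.norm_eq_abs, abs_of_nonneg (hfnonneg p.1 p.2), master p.1 p.2, hg]
    have h1 : Real.exp (-(σ₂ ^ 2 * ((y₁ + p.1) ^ 2 + p.1 ^ 2) - 2 * ρ * (y₁ + 2 * p.1) * p.2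
          + 2 * σ₁ ^ 2 * p.2 ^ 2) / (2 * D))
        ≤ Real.exp (-(4 * σ₁ ^ 2)⁻¹ * p.1 ^ 2) * Real.exp (-(4 * σ₂ ^ 2)⁻¹ * p.2 ^ 2) := by
      rw [← Real.exp_add]
      exact Real.exp_le_exp.2 (hEbound p.1 p.2)
    calc C * (p.2 ^ 2 * Real.exp (-(σ₂ ^ 2 * ((y₁ + p.1) ^ 2 + p.1 ^ 2)
            - 2 * ρ * (y₁ + 2 * p.1) * p.2 + 2 * σ₁ ^ 2 * p.2 ^ 2) / (2 * D)))
        ≤ C * (p.2 ^ 2 * (Real.exp (-(4 * σ₁ ^ 2)⁻¹ * p.1 ^ 2)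
            * Real.exp (-(4 * σ₂ ^ 2)⁻¹ * p.2 ^ 2))) := by
          have hc2 : (0:ℝ) ≤ p.2 ^ 2 := sq_nonneg _
          gcongr
      _ = C * Real.exp (-(4 * σ₁ ^ 2)⁻¹ * p.1 ^ 2)
            * (p.2 ^ 2 * Real.exp (-(4 * σ₂ ^ 2)⁻¹ * p.2 ^ 2)) := by ring
  have inner : ∀ t₂ : ℝ, (∫ t₁ : ℝ, f t₁ t₂)
      = (C * Real.sqrt (π / (σ₂ ^ 2 / D)) * Real.exp (-(σ₂ ^ 2 * y₁ ^ 2) / (4 * D)))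
        * (t₂ ^ 2 * Real.exp (-(1 / σ₂ ^ 2) * t₂ ^ 2)) := by
    intro t₂
    have hform : ∀ t₁ : ℝ, f t₁ t₂ = (C * t₂ ^ 2) *
        Real.exp (-(σ₂ ^ 2 / D) * t₁ ^ 2 + ((2 * ρ * t₂ - σ₂ ^ 2 * y₁) / D) * t₁
          + (-(σ₂ ^ 2 * y₁ ^ 2) - 2 * σ₁ ^ 2 * t₂ ^ 2 + 2 * ρ * y₁ * t₂) / (2 * D)) := by
      intro t₁
      rw [master]
      have hsplit : -(σ₂ ^ 2 * ((y₁ + t₁) ^ 2 + t₁ ^ 2) - 2 * ρ * (y₁ + 2 * t₁) * t₂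
            + 2 * σ₁ ^ 2 * t₂ ^ 2) / (2 * D)
          = -(σ₂ ^ 2 / D) * t₁ ^ 2 + ((2 * ρ * t₂ - σ₂ ^ 2 * y₁) / D) * t₁
            + (-(σ₂ ^ 2 * y₁ ^ 2) - 2 * σ₁ ^ 2 * t₂ ^ 2 + 2 * ρ * y₁ * t₂) / (2 * D) := by
        field_simp
        ring
      rw [hsplit]
      ring
    simp only [hform]
    rw [integral_const_mul, aux_integral_exp_quad (by positivity : (0:ℝ) < σ₂ ^ 2 / D)]
    have harg2 : (-(σ₂ ^ 2 * y₁ ^ 2) - 2 * σ₁ ^ 2 * t₂ ^ 2 + 2 * ρ * y₁ * t₂) / (2 * D)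
        + ((2 * ρ * t₂ - σ₂ ^ 2 * y₁) / D) ^ 2 / (4 * (σ₂ ^ 2 / D))
        = -(σ₂ ^ 2 * y₁ ^ 2) / (4 * D) + -(1 / σ₂ ^ 2) * t₂ ^ 2 := by
      field_simp
      rw [hD0]
      ring
    rw [harg2, Real.exp_add]
    ring
  have goal_eq : (∫ t₁ : ℝ, ∫ t₂ in Ioi (0:ℝ),
        pdens σ₁ σ₂ ρ (y₁ + t₁) t₂ * pdens σ₁ σ₂ ρ t₁ t₂)
      = ∫ t₂ in Ioi (0:ℝ), ∫ t₁ : ℝ, f t₁ t₂ := integral_integral_swap hFint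
  rw [goal_eq]
  simp only [inner]
  rw [integral_const_mul, aux_integral_Ioi_sq_mul_exp (by positivity : (0:ℝ) < 1 / σ₂ ^ 2)]
  have h1 : Real.sqrt (π / (σ₂ ^ 2 / D)) = Real.sqrt π * Real.sqrt D / σ₂ := by
    rw [show π / (σ₂ ^ 2 / D) = π * D / σ₂ ^ 2 by field_simp,
      Real.sqrt_div (by positivity), Real.sqrt_mul pi_pos.le, Real.sqrt_sq hσ₂.le]
  have h2 : Real.sqrt (π / (1 / σ₂ ^ 2)) = Real.sqrt π * σ₂ := by
    rw [show π / (1 / σ₂ ^ 2) = π * σ₂ ^ 2 by field_simp,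
      Real.sqrt_mul pi_pos.le, Real.sqrt_sq hσ₂.le]
  have h3 : Real.sqrt π * Real.sqrt π = π := Real.mul_self_sqrt pi_pos.le
  have h4 : Real.sqrt D * Real.sqrt D = D := Real.mul_self_sqrt hD.le
  have h5 : Real.sqrt D ≠ 0 := by positivity
  have h6 : Real.sqrt π ≠ 0 := by positivity
  rw [h1, h2, hC]
  field_simp
  linear_combination (8 * (Real.sqrt D * Real.sqrt D)) * h3 + (8 * π) * h4


end DensityConvolution
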